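/- Let M = lim←_ψ E[[X]] be the set of sequences (m_0, m_1, …) with m_i ∈ E[[X]] and ψ(m_{i+1}) = m_i, where ψ : E[[X]] → E[[X]] is defined by f = Σ_{i=0}^{p-1} φ(f_i)(1+X)^i ↦ f_0 and φ(f)(X) = f(X^p). Equip M with the Z_p^×-action (g·m)_i = g·m_i, the E[[X]]-module structure (f·m)_i = φ^i(f)·m_i, and the X-adic valuation. Then M^{Γ_k-sh,k} = i(E[[X]]), where i(f) = (f, φ(f), φ²(f), …). -/

import Mathlib

set_option linter.unusedSectionVars false


open PowerSeries

/-- The binomial coefficient `C(z,n)` of a `p`-adic integer `z`, reduced modulo `p`. -/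
noncomputable def binomMod (p : ℕ) [Fact p.Prime] (E : Type*) [Field E] [CharP E p]
    (z : ℤ_[p]) (n : ℕ) : E :=
  ZMod.castHom dvd_rfl E (((z.appr (n + 1)).choose n : ZMod p))

/-- The power series `(1+X)^a = ∑ C(a,n) X^n ∈ E[[X]]` for `a ∈ ℤ_p`. -/
noncomputable def onePlusXPow (p : ℕ) [Fact p.Prime] (E : Type*) [Field E] [CharP E p]
    (a : ℤ_[p]) : PowerSeries E :=
  PowerSeries.mk fun n => binomMod p E a n

/-- The Frobenius `φ : f(X) ↦ f(X^p)` on `E[[X]]`. -/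
noncomputable def expandP (p : ℕ) (E : Type*) [Field E] (f : PowerSeries E) : PowerSeries E :=
  PowerSeries.mk fun k => if p ∣ k then PowerSeries.coeff (k / p) f else 0

section Aux

variable {p : ℕ} [Fact p.Prime] {E : Type*} [Field E] [CharP E p]

theorem psh_charP : CharP (PowerSeries E) p :=
  charP_of_injective_ringHom (f := (PowerSeries.C (R := E)))
    (fun a b h => by simpa using congrArg (PowerSeries.constantCoeff (R := E)) h) p

theorem psh_coeff_sum (b : ℕ → E) (N s : ℕ) :
    PowerSeries.coeff (R := E) s (∑ n ∈ Finset.range N, (PowerSeries.C (R := E)) (b n) * X ^ n) =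
      if s < N then b s else 0 := by
  rw [map_sum]
  simp [PowerSeries.coeff_X_pow, mul_ite, mul_one, mul_zero, Finset.sum_ite_eq]

theorem psh_coeff_one_add_pow (b n : ℕ) :
    PowerSeries.coeff (R := E) n ((1 + X) ^ b) = (b.choose n : E) := by
  have h : ((1 : PowerSeries E) + X) ^ b = (X + 1) ^ b := by ring
  rw [h, add_pow]
  simp only [one_pow, mul_one, map_sum]
  have : ∀ j ∈ Finset.range (b + 1),
      PowerSeries.coeff (R := E) n ((X : PowerSeries E) ^ j * (b.choose j : PowerSeries E)) =
        if n = j then (b.choose j : E) else 0 := by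
    intro j _
    rw [← map_natCast ((PowerSeries.C (R := E))) (b.choose j), mul_comm, PowerSeries.coeff_C_mul_X_pow]
  rw [Finset.sum_congr rfl this]
  by_cases hb : n < b + 1
  · simp [Finset.sum_ite_eq, Finset.mem_range, hb]
  · rw [Finset.sum_eq_zero, Nat.choose_eq_zero_of_lt (by omega), Nat.cast_zero]
    intro j hj
    rw [Finset.mem_range] at hj
    rw [if_neg]
    omega

theorem psh_one_add_X_pow_q (q m : ℕ) :
    ∃ w : PowerSeries E, ((1 : PowerSeries E) + X ^ q) ^ m = 1 + X ^ q * w := by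
  have h := sub_dvd_pow_sub_pow ((1 : PowerSeries E) + X ^ q) 1 m
  simp only [add_sub_cancel_left, one_pow] at h
  obtain ⟨w, hw⟩ := h
  exact ⟨w, by rw [← hw]; ring⟩

/-- `(1+X)^{p^r} = 1 + X^{p^r}` in char `p`. -/
theorem psh_one_add_X_pow_char (r : ℕ) :
    ((1 : PowerSeries E) + X) ^ p ^ r = 1 + X ^ p ^ r := by
  haveI := psh_charP (p := p) (E := E)
  rw [add_pow_char_pow, one_pow]

/-- coefficient `< p^r` of `(1+X)^{1 + p^r m}`. -/
theorem psh_coeff_special (r m n : ℕ) (hn : n < p ^ r) :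
    PowerSeries.coeff (R := E) n ((1 + X) ^ (1 + p ^ r * m)) = PowerSeries.coeff (R := E) n (1 + X) := by
  obtain ⟨w, hw⟩ := psh_one_add_X_pow_q (E := E) (p ^ r) m
  rw [pow_add, pow_mul, psh_one_add_X_pow_char, hw, pow_one, mul_add, mul_one, map_add]
  have : (1 + X : PowerSeries E) * (X ^ p ^ r * w) = X ^ p ^ r * ((1 + X) * w) := by ring
  rw [this, PowerSeries.coeff_X_pow_mul', if_neg (by omega), add_zero]

/-- choose congruence mod `p^{n+1}`, cast to `E`. -/
theorem psh_choose_congr (a s n : ℕ) :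
    (((a + p ^ (n + 1) * s).choose n : ℕ) : E) = ((a.choose n : ℕ) : E) := by
  rw [← psh_coeff_one_add_pow, ← psh_coeff_one_add_pow]
  obtain ⟨w, hw⟩ := psh_one_add_X_pow_q (E := E) (p ^ (n + 1)) s
  rw [pow_add, pow_mul, psh_one_add_X_pow_char, hw, mul_add, mul_one, map_add]
  have h2 : (1 + X : PowerSeries E) ^ a * (X ^ p ^ (n+1) * w)
      = X ^ p ^ (n+1) * ((1 + X) ^ a * w) := by ring
  have hlt : n < p ^ (n + 1) :=
    lt_of_lt_of_le (Nat.lt_pow_self (n := n) (Fact.out : p.Prime).one_lt)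
      (Nat.pow_le_pow_right (Fact.out : p.Prime).one_lt.le (by omega))
  rw [h2, PowerSeries.coeff_X_pow_mul', if_neg (by omega), add_zero]

/-- transfer: `binomMod` computed from any natural congruent mod `p^{n+1}`. -/
theorem binomMod_eq_choose (z : ℤ_[p]) (b n : ℕ)
    (h : (p : ℤ_[p]) ^ (n + 1) ∣ (z - b)) : binomMod p E z n = (b.choose n : E) := by
  set a := z.appr (n + 1) with ha
  have hspec : (p : ℤ_[p]) ^ (n + 1) ∣ (z - a) := by
    rw [← Ideal.mem_span_singleton]
    exact PadicInt.appr_spec (n + 1) z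
  have hab : (p : ℤ_[p]) ^ (n + 1) ∣ ((a : ℤ_[p]) - b) := by
    have h2 := dvd_sub h hspec
    rwa [show z - (b:ℤ_[p]) - (z - (a:ℤ_[p])) = (a:ℤ_[p]) - b by ring] at h2
  have hint : ((p : ℤ) ^ (n + 1)) ∣ ((a : ℤ) - (b : ℤ)) := by
    rw [← PadicInt.pow_p_dvd_int_iff]
    push_cast
    exact hab
  have hbase : binomMod p E z n = ((a.choose n : ℕ) : E) := by
    rw [binomMod, ← ha]
    rw [show ((a.choose n : ZMod p)) = ((a.choose n : ℕ) : ZMod p) from rfl]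
    rw [map_natCast (ZMod.castHom dvd_rfl E)]
  rw [hbase]
  rcases le_total a b with hle | hle
  · obtain ⟨s, hs⟩ : (p ^ (n+1) : ℕ) ∣ b - a := by
      have : ((p ^ (n+1) : ℕ) : ℤ) ∣ ((b - a : ℕ) : ℤ) := by
        rw [Int.ofNat_sub hle]
        push_cast
        push_cast at hint
        rw [show (b : ℤ) - a = -((a:ℤ) - b) by ring]
        exact dvd_neg.mpr hint
      exact_mod_cast this
    have hb : b = a + p ^ (n+1) * s := by omega
    rw [hb, psh_choose_congr]
  · obtain ⟨s, hs⟩ : (p ^ (n+1) : ℕ) ∣ a - b := by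
      have : ((p ^ (n+1) : ℕ) : ℤ) ∣ ((a - b : ℕ) : ℤ) := by
        rw [Int.ofNat_sub hle]
        push_cast
        push_cast at hint
        exact hint
      exact_mod_cast this
    have hb : a = b + p ^ (n+1) * s := by omega
    rw [hb, psh_choose_congr]


theorem onePlusXPow_natCast (b : ℕ) :
    onePlusXPow p E (b : ℤ_[p]) = (1 + X) ^ b := by
  ext n
  rw [onePlusXPow, PowerSeries.coeff_mk, psh_coeff_one_add_pow,
    binomMod_eq_choose ((b : ℕ) : ℤ_[p]) b n (by simp)]

/-- If `z ≡ 1 mod p^ℓ` then `(1+X)^z - (1+X)` is divisible by `X^{p^ℓ}`. -/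
theorem key_dvd (ℓ : ℕ) (hℓ : 1 ≤ ℓ) (z : ℤ_[p]) (hz : (p : ℤ_[p]) ^ ℓ ∣ (z - 1)) :
    (X : PowerSeries E) ^ (p ^ ℓ) ∣ (onePlusXPow p E z - 1 - X) := by
  have hp1 : 1 < p := (Fact.out : p.Prime).one_lt
  rw [PowerSeries.X_pow_dvd_iff]
  intro n hn
  set r := min ℓ (n + 1) with hr
  -- the approximation a = z.appr (n+1)
  set a := z.appr (n + 1) with ha
  have hspec : (p : ℤ_[p]) ^ (n + 1) ∣ (z - a) := by
    rw [← Ideal.mem_span_singleton]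
    exact PadicInt.appr_spec (n + 1) z
  have hra : (p : ℤ_[p]) ^ r ∣ ((a : ℤ_[p]) - 1) := by
    have h1 : (p : ℤ_[p]) ^ r ∣ (z - a) :=
      dvd_trans (pow_dvd_pow _ (by omega)) hspec
    have h2 : (p : ℤ_[p]) ^ r ∣ (z - 1) :=
      dvd_trans (pow_dvd_pow _ (by omega)) hz
    have := dvd_sub h2 h1
    rwa [show z - 1 - (z - (a:ℤ_[p])) = (a:ℤ_[p]) - 1 by ring] at this
  have hint : ((p : ℤ) ^ r) ∣ ((a : ℤ) - 1) := by
    rw [← PadicInt.pow_p_dvd_int_iff]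
    push_cast
    exact hra
  have hr1 : 1 ≤ r := by omega
  have hpr : 1 < p ^ r := Nat.one_lt_pow (by omega) hp1
  have ha1 : 1 ≤ a := by
    by_contra hc
    have : a = 0 := by omega
    rw [this] at hint
    norm_num at hint
    have := Int.le_of_dvd (by norm_num) hint
    have : (1:ℤ) < (p:ℤ) ^ r := by exact_mod_cast hpr
    omega
  obtain ⟨m, hmm⟩ : (p ^ r : ℕ) ∣ a - 1 := by
    have : ((p ^ r : ℕ) : ℤ) ∣ ((a - 1 : ℕ) : ℤ) := by
      rw [Int.ofNat_sub ha1]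
      push_cast
      push_cast at hint
      exact hint
    exact_mod_cast this
  have haform : a = 1 + p ^ r * m := by omega
  have hb : binomMod p E z n = PowerSeries.coeff (R := E) n (1 + X) := by
    rw [binomMod_eq_choose z a n hspec, ← psh_coeff_one_add_pow, haform]
    refine psh_coeff_special r m n ?_
    rcases le_or_gt ℓ (n+1) with hc | hc
    · have hre : r = ℓ := by omega
      rw [hre]; exact hn
    · have hre : r = n + 1 := by omega
      rw [hre]
      exact lt_of_lt_of_le (Nat.lt_pow_self (n := n) hp1)
        (Nat.pow_le_pow_right (by omega) (by omega))
  have : PowerSeries.coeff (R := E) n (onePlusXPow p E z - 1 - X)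
      = PowerSeries.coeff (R := E) n (onePlusXPow p E z) - PowerSeries.coeff (R := E) n (1 + X) := by
    rw [show onePlusXPow p E z - 1 - X = onePlusXPow p E z - (1 + X) by ring, map_sub]
  rw [this, onePlusXPow, PowerSeries.coeff_mk, hb, sub_self]

/-- `1 + p^ℓ` is a unit of `ℤ_p`. -/
theorem exists_unit_one_add (ℓ : ℕ) (hℓ : 1 ≤ ℓ) :
    ∃ g : ℤ_[p]ˣ, (g : ℤ_[p]) = 1 + (p : ℤ_[p]) ^ ℓ := by
  have hp1 : 1 < p := (Fact.out : p.Prime).one_lt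
  have hnorm : ‖((p : ℤ_[p]) ^ ℓ)‖ < 1 := by
    rw [norm_pow, PadicInt.norm_p]
    have h1 : ((p:ℝ))⁻¹ < 1 := by
      rw [inv_lt_one_iff₀]
      right
      exact_mod_cast hp1
    calc ((p:ℝ))⁻¹ ^ ℓ ≤ ((p:ℝ))⁻¹ ^ 1 := by
          apply pow_le_pow_of_le_one (by positivity) h1.le hℓ
      _ < 1 := by simpa using h1
  have : IsUnit ((1 : ℤ_[p]) + (p : ℤ_[p]) ^ ℓ) := by
    by_contra hc
    rw [PadicInt.not_isUnit_iff] at hc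
    have h2 : ‖(1 : ℤ_[p])‖ < 1 := by
      have : (1 : ℤ_[p]) = (1 + (p : ℤ_[p]) ^ ℓ) + (-(p : ℤ_[p]) ^ ℓ) := by ring
      rw [this]
      refine lt_of_le_of_lt (PadicInt.nonarchimedean _ _) (max_lt hc ?_)
      rwa [norm_neg]
    simp at h2
  obtain ⟨g, hg⟩ := this
  exact ⟨g, hg⟩


/-- Decomposition of `τ f - f` via truncation at `D`. -/
theorem psh_decomp (τ : RingAut (PowerSeries E))
    (hC : ∀ c : E, τ ((PowerSeries.C (R := E)) c) = (PowerSeries.C (R := E)) c)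
    (hcont : ∀ (f : PowerSeries E) (n : ℕ),
      (X : PowerSeries E) ^ n ∣ f → (X : PowerSeries E) ^ n ∣ τ f)
    (f : PowerSeries E) (D : ℕ) :
    ∃ r : PowerSeries E, (X : PowerSeries E) ^ D ∣ r ∧
      τ f - f = (∑ n ∈ Finset.range D,
        (PowerSeries.C (R := E)) (PowerSeries.coeff (R := E) n f) * ((τ X) ^ n - X ^ n)) + r := by
  set P : PowerSeries E :=
    ∑ n ∈ Finset.range D, (PowerSeries.C (R := E)) (PowerSeries.coeff (R := E) n f) * X ^ n with hP
  have hfP : (X : PowerSeries E) ^ D ∣ f - P := by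
    rw [PowerSeries.X_pow_dvd_iff]
    intro m hm
    rw [map_sub, hP, psh_coeff_sum, if_pos hm, sub_self]
  refine ⟨τ (f - P) - (f - P), dvd_sub (hcont _ _ hfP) hfP, ?_⟩
  have hτP : τ P = ∑ n ∈ Finset.range D,
      (PowerSeries.C (R := E)) (PowerSeries.coeff (R := E) n f) * (τ X) ^ n := by
    rw [hP, map_sum]
    refine Finset.sum_congr rfl fun n _ => ?_
    rw [map_mul, map_pow, hC]
  have expand : ∑ n ∈ Finset.range D,
      (PowerSeries.C (R := E)) (PowerSeries.coeff (R := E) n f) * ((τ X) ^ n - X ^ n) = τ P - P := by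
    rw [hτP, hP, ← Finset.sum_sub_distrib]
    refine Finset.sum_congr rfl fun n _ => ?_
    ring
  rw [expand, map_sub τ f P]
  ring

/-- first-order binomial expansion with remainder. -/
theorem psh_pow_approx {R : Type*} [CommRing R] (x w : R) :
    ∀ n : ℕ, ∃ t : R, (x + w) ^ n - x ^ n = (n : R) * x ^ (n - 1) * w + w ^ 2 * t := by
  have aux : ∀ n : ℕ, ∃ t : R,
      (x + w) ^ (n + 1) - x ^ (n + 1) = ((n : R) + 1) * x ^ n * w + w ^ 2 * t := by
    intro n
    induction n with
    | zero => exact ⟨0, by ring⟩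
    | succ n ih =>
      obtain ⟨t, ht⟩ := ih
      refine ⟨((n : R) + 1) * x ^ n + (x + w) * t, ?_⟩
      have h : (x + w) ^ (n + 1 + 1) - x ^ (n + 1 + 1)
          = (x + w) * ((x + w) ^ (n + 1) - x ^ (n + 1)) + w * x ^ (n + 1) := by ring
      rw [h, ht]
      push_cast
      ring
  intro n
  cases n with
  | zero => exact ⟨0, by simp⟩
  | succ n =>
    obtain ⟨t, ht⟩ := aux n
    refine ⟨t, ?_⟩
    rw [ht]
    push_cast [Nat.add_sub_cancel]
    try ring


theorem expandP_iterate_coeff (hp : 1 < p) (f : PowerSeries E) (j n : ℕ) :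
    PowerSeries.coeff (R := E) n ((expandP p E)^[j] f) =
      if p ^ j ∣ n then PowerSeries.coeff (R := E) (n / p ^ j) f else 0 := by
  induction j generalizing n with
  | zero => simp
  | succ j ih =>
    rw [Function.iterate_succ_apply', expandP, PowerSeries.coeff_mk]
    by_cases h1 : p ∣ n
    · rw [if_pos h1, ih]
      by_cases h2 : p ^ j ∣ n / p
      · rw [if_pos h2, if_pos, Nat.div_div_eq_div_mul, ← pow_succ']
        rw [pow_succ']
        exact (Nat.dvd_div_iff_mul_dvd h1).mp h2
      · rw [if_neg h2, if_neg]
        intro hc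
        exact h2 ((Nat.dvd_div_iff_mul_dvd h1).mpr (by rwa [← pow_succ']))
    · rw [if_neg h1, if_neg]
      intro hc
      exact h1 (dvd_trans (dvd_pow_self p (by omega)) hc)

/-- Backward core: `X`-adic contraction for series supported on multiples of `p^j`. -/
theorem psh_backward (τ : RingAut (PowerSeries E))
    (hC : ∀ c : E, τ ((PowerSeries.C (R := E)) c) = (PowerSeries.C (R := E)) c)
    (hcont : ∀ (f : PowerSeries E) (n : ℕ),
      (X : PowerSeries E) ^ n ∣ f → (X : PowerSeries E) ^ n ∣ τ f)
    (ℓ : ℕ) (hℓ : 1 ≤ ℓ) (z : ℤ_[p]) (hz : (p : ℤ_[p]) ^ ℓ ∣ (z - 1))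
    (hτX : τ X = onePlusXPow p E z - 1)
    (j : ℕ) (f : PowerSeries E) (hsupp : ∀ n, ¬ p ^ j ∣ n → PowerSeries.coeff (R := E) n f = 0)
    (c : ℕ) (hc : c ≤ p ^ ℓ) :
    (X : PowerSeries E) ^ (c * p ^ j) ∣ (τ f - f) := by
  haveI := psh_charP (p := p) (E := E)
  obtain ⟨r, hrdvd, heq⟩ := psh_decomp τ hC hcont f (c * p ^ j)
  have hYX : (X : PowerSeries E) ^ (p ^ ℓ) ∣ (τ X - X) := by
    rw [hτX, sub_sub] at *
    have := key_dvd (E := E) ℓ hℓ z hz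
    rwa [sub_sub] at this
  rw [heq]
  refine dvd_add (Finset.dvd_sum fun n hn => ?_) (dvd_trans (pow_dvd_pow X ?_) hrdvd)
  swap
  · exact le_refl _
  by_cases hd : p ^ j ∣ n
  · obtain ⟨t, rfl⟩ := hd
    have h1 : (τ X) ^ (p ^ j * t) - X ^ (p ^ j * t)
        = ((τ X) ^ (p ^ j)) ^ t - ((X : PowerSeries E) ^ (p ^ j)) ^ t := by
      rw [pow_mul, pow_mul]
    have h2 : ((τ X) ^ (p ^ j) - (X : PowerSeries E) ^ (p ^ j)) ∣
        ((τ X) ^ (p ^ j)) ^ t - ((X : PowerSeries E) ^ (p ^ j)) ^ t :=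
      sub_dvd_pow_sub_pow _ _ t
    have h3 : (τ X) ^ (p ^ j) - (X : PowerSeries E) ^ (p ^ j) = (τ X - X) ^ (p ^ j) :=
      (sub_pow_char_pow (τ X) X j).symm
    have h4 : (X : PowerSeries E) ^ (p ^ ℓ * p ^ j) ∣ (τ X - X) ^ (p ^ j) := by
      rw [pow_mul]
      exact pow_dvd_pow_of_dvd hYX (p ^ j)
    have h5 : (X : PowerSeries E) ^ (c * p ^ j) ∣ (τ X) ^ (p ^ j * t) - X ^ (p ^ j * t) := by
      rw [h1]
      exact dvd_trans (dvd_trans (pow_dvd_pow X (Nat.mul_le_mul_right _ hc)) (h3 ▸ h4)) h2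
    exact Dvd.dvd.mul_left h5 _
  · rw [hsupp n hd, map_zero, zero_mul]
    exact dvd_zero _


/-- Forward core: the super-Hölder condition at depth `J ≥ 1` kills coefficients
prime to `p`. -/
theorem psh_forward (k : ℕ) (hk : 1 ≤ k)
    (σ : ℤ_[p]ˣ →* RingAut (PowerSeries E))
    (hσX : ∀ g : ℤ_[p]ˣ, σ g X = onePlusXPow p E (g : ℤ_[p]) - 1)
    (hσC : ∀ (g : ℤ_[p]ˣ) (c : E), σ g ((PowerSeries.C (R := E)) c) = (PowerSeries.C (R := E)) c)
    (hσcont : ∀ (g : ℤ_[p]ˣ) (f : PowerSeries E) (n : ℕ),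
      (X : PowerSeries E) ^ n ∣ f → (X : PowerSeries E) ^ n ∣ σ g f)
    (μ : ℝ) (J : ℕ) (hJ : 1 ≤ J) (f : PowerSeries E)
    (H : ∀ (i : ℕ) (g : ℤ_[p]ˣ),
        (∃ b : ℤ_[p], (g : ℤ_[p]) = 1 + (p : ℤ_[p]) ^ (k + i) * b) →
        ∀ c : ℕ, (c : ℝ) ≤ (p : ℝ) ^ ((k : ℝ) + (i : ℝ)) + μ →
          (X : PowerSeries E) ^ (c * p ^ J) ∣ (σ g f - f)) :
    ∀ n : ℕ, ¬ p ∣ n → PowerSeries.coeff (R := E) n f = 0 := by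
  classical
  have hp1 : 1 < p := (Fact.out : p.Prime).one_lt
  by_contra hcon
  push_neg at hcon
  obtain ⟨nbad, hnbad⟩ := hcon
  have hex : ∃ n, ¬ p ∣ n ∧ PowerSeries.coeff (R := E) n f ≠ 0 := ⟨nbad, hnbad⟩
  set n₀ := Nat.find hex with hn₀
  obtain ⟨hn₀p, hn₀ne⟩ := Nat.find_spec hex
  rw [← hn₀] at hn₀p hn₀ne
  have hmin : ∀ s, s < n₀ → ¬ p ∣ s → PowerSeries.coeff (R := E) s f = 0 := by
    intro s hs hps
    have := Nat.find_min hex hs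
    push_neg at this
    exact this hps
  have hn₀1 : 1 ≤ n₀ := by
    rcases Nat.eq_zero_or_pos n₀ with h | h
    · exact absurd (by rw [h]; exact dvd_zero p) hn₀p
    · exact h
  set d : ℕ := ⌈-μ⌉₊ with hd
  set i : ℕ := p * d + n₀ with hi
  set q : ℕ := p ^ (k + i) with hq
  have he1 : p * d + n₀ + 1 ≤ q := by
    have h1 : i < p ^ i := Nat.lt_pow_self (n := i) hp1
    have h2 : p ^ i ≤ p ^ (k + i) := Nat.pow_le_pow_right (by omega) (by omega)
    omega
  have hq1 : n₀ + 1 ≤ q := by omega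
  obtain ⟨g, hg⟩ := exists_unit_one_add (p := p) (k + i) (by omega)
  set c : ℕ := q - d with hcq'
  have hdq : d ≤ q := by
    have : d ≤ p * d := Nat.le_mul_of_pos_left d (by omega)
    omega
  have hcq : c + d = q := Nat.sub_add_cancel hdq
  -- arithmetic
  have e2 : 2 * d + n₀ + 1 ≤ q := by
    have : 2 * d ≤ p * d := Nat.mul_le_mul_right d (by omega)
    linarith
  have e3 : d + n₀ + 1 ≤ c := by omega
  have e4 : q + n₀ + 1 ≤ c * 2 := by omega
  have e5 : c * 2 ≤ c * p := Nat.mul_le_mul_left _ (by omega)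
  have e6 : c * p ≤ c * p ^ J := Nat.mul_le_mul_left _ (by
    calc p = p ^ 1 := (pow_one p).symm
    _ ≤ p ^ J := Nat.pow_le_pow_right (by omega) hJ)
  set D : ℕ := q + n₀ with hD
  have hDle : D + 1 ≤ c * p ^ J := by linarith
  -- apply the hypothesis
  have hcr : (c : ℝ) ≤ (p : ℝ) ^ ((k : ℝ) + (i : ℝ)) + μ := by
    have hqr : (p : ℝ) ^ ((k : ℝ) + (i : ℝ)) = (q : ℝ) := by
      rw [show (k : ℝ) + (i : ℝ) = ((k + i : ℕ) : ℝ) by push_cast; ring,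
        Real.rpow_natCast, hq]
      push_cast
      ring
    rw [hqr]
    have h1 : (c : ℝ) = (q : ℝ) - (d : ℝ) := by
      have := hcq
      push_cast [← this]
      ring
    rw [h1]
    have h2 : -μ ≤ (d : ℕ) := Nat.le_ceil (-μ)
    linarith
  have hdvd := H i g ⟨1, by rw [hg]; ring⟩ c hcr
  have hcoeff0 : PowerSeries.coeff (R := E) (D - 1) (σ g f - f) = 0 := by
    rw [PowerSeries.X_pow_dvd_iff] at hdvd
    exact hdvd (D - 1) (by omega)
  -- decomposition
  obtain ⟨r, hrdvd, heq⟩ := psh_decomp (σ g) (hσC g) (hσcont g) f D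
  set W : PowerSeries E := X ^ q * (1 + X) with hW
  have hYval : (σ g) X = X + W := by
    rw [hσX g, hg, show (1 : ℤ_[p]) + (p : ℤ_[p]) ^ (k + i) = ((1 + p ^ (k + i) : ℕ) : ℤ_[p])
      by push_cast; ring, onePlusXPow_natCast, pow_add, pow_one, psh_one_add_X_pow_char, hW, hq]
    ring
  -- the linear part
  set bfun : ℕ → E := fun n => PowerSeries.coeff (R := E) (n + 1) f * ((n + 1 : ℕ) : E) with hbfun
  set T : PowerSeries E := ∑ n ∈ Finset.range D,
    (PowerSeries.C (R := E)) (PowerSeries.coeff (R := E) n f) * Classical.choose (psh_pow_approx X W n) with hT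
  set S : PowerSeries E := ∑ n ∈ Finset.range (D - 1), (PowerSeries.C (R := E)) (bfun n) * X ^ n with hS
  have hsum : (∑ n ∈ Finset.range D,
      (PowerSeries.C (R := E)) (PowerSeries.coeff (R := E) n f) * (((σ g) X) ^ n - X ^ n))
      = S * W + W ^ 2 * T := by
    have hterm : ∀ n ∈ Finset.range D,
        (PowerSeries.C (R := E)) (PowerSeries.coeff (R := E) n f) * (((σ g) X) ^ n - X ^ n)
        = ((PowerSeries.C (R := E)) (PowerSeries.coeff (R := E) n f * ((n : ℕ) : E)) * X ^ (n - 1)) * W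
          + W ^ 2 * ((PowerSeries.C (R := E)) (PowerSeries.coeff (R := E) n f)
              * Classical.choose (psh_pow_approx X W n)) := by
      intro n _
      have hspec := Classical.choose_spec (psh_pow_approx X W n)
      rw [hYval, map_mul, map_natCast ((PowerSeries.C (R := E)))]
      linear_combination ((PowerSeries.C (R := E)) (PowerSeries.coeff (R := E) n f)) * hspec
    have hSeq : (∑ n ∈ Finset.range D,
        (PowerSeries.C (R := E)) (PowerSeries.coeff (R := E) n f * ((n : ℕ) : E)) * X ^ (n - 1)) = S := by
      have hD0 : D = (D - 1) + 1 := by omega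
      rw [hD0, Finset.sum_range_succ']
      simp only [Nat.cast_zero, mul_zero, map_zero, zero_mul, add_zero, Nat.add_sub_cancel]
      rfl
    rw [Finset.sum_congr rfl hterm, Finset.sum_add_distrib, ← Finset.sum_mul, ← Finset.mul_sum,
      hSeq, hT]
  -- coefficient extraction
  have hcS : ∀ s, PowerSeries.coeff (R := E) s S = if s < D - 1 then bfun s else 0 := fun s =>
    psh_coeff_sum bfun (D - 1) s
  have hW2 : PowerSeries.coeff (R := E) (D - 1) (W ^ 2 * T) = 0 := by
    have hWsq : (X : PowerSeries E) ^ (2 * q) ∣ W ^ 2 := by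
      rw [hW, mul_pow, ← pow_mul, mul_comm q 2]
      exact dvd_mul_right _ _
    have hdvd2 : (X : PowerSeries E) ^ (2 * q) ∣ W ^ 2 * T := hWsq.mul_right T
    rw [PowerSeries.X_pow_dvd_iff] at hdvd2
    exact hdvd2 (D - 1) (by omega)
  have hSW : PowerSeries.coeff (R := E) (D - 1) (S * W) =
      PowerSeries.coeff (R := E) (n₀ - 1) (S * (1 + X)) := by
    have h1 : S * W = X ^ q * (S * (1 + X)) := by rw [hW]; ring
    have h2 : D - 1 = (n₀ - 1) + q := by omega
    rw [h1, h2, PowerSeries.coeff_X_pow_mul]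
  have hr0 : PowerSeries.coeff (R := E) (D - 1) r = 0 := by
    rw [PowerSeries.X_pow_dvd_iff] at hrdvd
    exact hrdvd (D - 1) (by omega)
  have hmain : PowerSeries.coeff (R := E) (n₀ - 1) (S * (1 + X)) = 0 := by
    have := congrArg (PowerSeries.coeff (R := E) (D - 1)) heq
    rw [hcoeff0, map_add, hsum, map_add, hW2, hr0, add_zero, add_zero, hSW] at this
    exact this.symm
  -- compute the coefficient
  have hfinal : PowerSeries.coeff (R := E) n₀ f * ((n₀ : ℕ) : E) = 0 := by
    rcases Nat.lt_or_ge n₀ 2 with hs0 | hs1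
    · -- n₀ = 1
      have hone : n₀ = 1 := by omega
      replace hmain : PowerSeries.coeff (R := E) 0 (S * (1 + X)) = 0 := by
        rw [hone] at hmain
        exact hmain
      rw [mul_one_add, mul_comm S X, map_add, PowerSeries.coeff_zero_X_mul, add_zero,
        hcS 0, if_pos (by omega)] at hmain
      have hb0 : bfun 0 = PowerSeries.coeff (R := E) n₀ f * ((n₀ : ℕ) : E) := by
        show PowerSeries.coeff (R := E) (0 + 1) f * ((0 + 1 : ℕ) : E) = _
        rw [hone]
      rw [hb0] at hmain
      exact hmain
    · -- n₀ = u + 2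
      obtain ⟨u, hu⟩ : ∃ u, n₀ = u + 2 := ⟨n₀ - 2, by omega⟩
      have hn1 : n₀ - 1 = u + 1 := by omega
      rw [hn1, mul_one_add, map_add, PowerSeries.coeff_succ_mul_X, hcS (u + 1), hcS u,
        if_pos (by omega), if_pos (by omega)] at hmain
      have hzero : bfun u = 0 := by
        show PowerSeries.coeff (R := E) (u + 1) f * ((u + 1 : ℕ) : E) = 0
        by_cases hdu : p ∣ (u + 1)
        · rw [(CharP.cast_eq_zero_iff E p (u + 1)).mpr hdu, mul_zero]
        · rw [hmin (u + 1) (by omega) hdu, zero_mul]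
      rw [hzero, add_zero] at hmain
      have hb1 : bfun (u + 1) = PowerSeries.coeff (R := E) n₀ f * ((n₀ : ℕ) : E) := by
        show PowerSeries.coeff (R := E) (u + 1 + 1) f * ((u + 1 + 1 : ℕ) : E) = _
        rw [show u + 1 + 1 = n₀ by omega]
      rw [hb1] at hmain
      exact hmain
  have hne : ((n₀ : ℕ) : E) ≠ 0 := fun hcast =>
    hn₀p ((CharP.cast_eq_zero_iff E p n₀).mp hcast)
  exact hn₀ne (by
    rcases mul_eq_zero.mp hfinal with h | h
    · exact h
    · exact absurd h hne)

end Aux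

/-- Prop `llpsh`: let `M = lim←_ψ E[[X]]` (sequences `(m_0, m_1, …)` with
`ψ(m_{j+1}) = m_j`), with the `ℤ_pˣ`-action `(g·m)_j = g·m_j`, module structure
`(f·m)_j = φ^j(f)·m_j` and the `X`-adic valuation (`val_X m ≥ c` iff
`X^{c·p^j} ∣ m_j` for all `j`). Then `M^{Γ_k-sh,k} = i(E[[X]])`, where
`i(f) = (f, φ(f), φ²(f), …)`. -/
theorem psi_limit_superHolder
    {p : ℕ} [Fact p.Prime] {E : Type*} [Field E] [CharP E p]
    (k : ℕ) (hk : 1 ≤ k) (hk2 : p = 2 → 2 ≤ k)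
    -- the operator `ψ`, left inverse of `φ`
    (ψ : PowerSeries E → PowerSeries E)
    (hψ : ∀ F : Fin p → PowerSeries E,
      ψ (∑ i : Fin p, expandP p E (F i) * (1 + X) ^ (i : ℕ)) = F 0)
    -- the action of `ℤ_pˣ` on `E[[X]]`, `a·f(X) = f((1+X)^a - 1)`
    (σ : ℤ_[p]ˣ →* RingAut (PowerSeries E))
    (hσX : ∀ g : ℤ_[p]ˣ, σ g X = onePlusXPow p E (g : ℤ_[p]) - 1)
    (hσC : ∀ (g : ℤ_[p]ˣ) (c : E), σ g (PowerSeries.C c) = PowerSeries.C c)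
    (hσcont : ∀ (g : ℤ_[p]ˣ) (f : PowerSeries E) (n : ℕ),
      (X : PowerSeries E) ^ n ∣ f → (X : PowerSeries E) ^ n ∣ σ g f)
    (hψσ : ∀ (g : ℤ_[p]ˣ) (f : PowerSeries E), ψ (σ g f) = σ g (ψ f))
    -- an element `m` of `M = lim←_ψ E[[X]]`
    (m : ℕ → PowerSeries E) (hm : ∀ j : ℕ, ψ (m (j + 1)) = m j) :
    (∃ mu : ℝ, ∀ (i : ℕ) (g : ℤ_[p]ˣ),
        (∃ b : ℤ_[p], (g : ℤ_[p]) = 1 + (p : ℤ_[p]) ^ (k + i) * b) →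
        ∀ c : ℕ, (c : ℝ) ≤ (p : ℝ) ^ ((k : ℝ) + (i : ℝ)) + mu →
          ∀ j : ℕ, (X : PowerSeries E) ^ (c * p ^ j) ∣ (σ g (m j) - m j)) ↔
    (∃ f : PowerSeries E, ∀ j : ℕ, m j = (expandP p E)^[j] f) := by
  classical
  have hp1 : 1 < p := (Fact.out : p.Prime).one_lt
  haveI : NeZero p := ⟨by omega⟩
  constructor
  · rintro ⟨μ, H⟩
    have step : ∀ j : ℕ, m (j + 1) = expandP p E (m j) := by
      intro j
      have hvan : ∀ n, ¬ p ∣ n → PowerSeries.coeff (R := E) n (m (j + 1)) = 0 :=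
        psh_forward k hk σ hσX hσC hσcont μ (j + 1) (by omega) (m (j + 1))
          (fun i g hg c hc => H i g hg c hc (j + 1))
      set h : PowerSeries E := PowerSeries.mk (fun t => PowerSeries.coeff (R := E) (p * t) (m (j + 1)))
        with hh
      have hexp : expandP p E h = m (j + 1) := by
        ext n
        rw [expandP, PowerSeries.coeff_mk]
        by_cases hd : p ∣ n
        · obtain ⟨t, rfl⟩ := hd
          rw [if_pos ⟨t, rfl⟩, hh, PowerSeries.coeff_mk]
          congr 1
          rw [Nat.mul_div_cancel_left t (by omega)]
        · rw [if_neg hd, (hvan n hd)]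
      have hψh := hψ (fun i => if i = 0 then h else 0)
      have hsum0 : (∑ i : Fin p, expandP p E (if i = 0 then h else 0) * (1 + X) ^ (i : ℕ))
          = expandP p E h := by
        rw [Fintype.sum_eq_single (0 : Fin p)]
        · simp
        · intro i hi
          rw [if_neg hi]
          have : expandP p E 0 = 0 := by
            ext n
            rw [expandP, PowerSeries.coeff_mk]
            simp
          rw [this, zero_mul]
      rw [hsum0, if_pos rfl] at hψh
      -- ψ (m (j+1)) = m j and ψ (expandP h) = h
      have hmj : m j = h := by rw [← hm j, ← hexp, hψh]
      rw [hmj]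
      exact hexp.symm
    have hiter : ∀ j : ℕ, m j = (expandP p E)^[j] (m 0) := by
      intro j
      induction j with
      | zero => simp
      | succ j ih => rw [step j, ih, Function.iterate_succ_apply']
    exact ⟨m 0, hiter⟩
  · rintro ⟨f, hf⟩
    refine ⟨0, ?_⟩
    intro i g hg c hc j
    obtain ⟨b, hb⟩ := hg
    have hcle : c ≤ p ^ (k + i) := by
      have hqr : (p : ℝ) ^ ((k : ℝ) + (i : ℝ)) = ((p ^ (k + i) : ℕ) : ℝ) := by
        rw [show (k : ℝ) + (i : ℝ) = ((k + i : ℕ) : ℝ) by push_cast; ring, Real.rpow_natCast]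
        push_cast
        ring
      rw [hqr, add_zero] at hc
      exact_mod_cast hc
    have hsupp : ∀ n, ¬ p ^ j ∣ n → PowerSeries.coeff (R := E) n (m j) = 0 := by
      intro n hn
      rw [hf j, expandP_iterate_coeff hp1 f j n, if_neg hn]
    exact psh_backward (σ g) (hσC g) (hσcont g) (k + i) (by omega) (g : ℤ_[p])
      (by rw [hb]; ring_nf; exact Dvd.intro b rfl) (hσX g) j (m j) hsupp c hcle
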